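/- Let E be a Euclidean space of dimension n, let m, k ≥ 0 with m ≥ k, and let f and f' be spherical harmonics on S^{n-1} of degrees m and k respectively. Then the pointwise product f·f' is a sum of spherical harmonics of degrees m+k, m+k-2, ..., m-k; that is, f·f' ∈ ⊕_{ℓ=0}^{k} Ω_{m+k-2ℓ}(E). -/
import Mathlib


noncomputable section

abbrev E (n : ℕ) := EuclideanSpace ℝ (Fin n)

def evalP {n : ℕ} (P : MvPolynomial (Fin n) ℝ) (v : E n) : ℝ :=
  MvPolynomial.eval (fun i => v i) P

def Harm {n : ℕ} (P : MvPolynomial (Fin n) ℝ) : Prop :=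
  ∑ i : Fin n, MvPolynomial.pderiv i (MvPolynomial.pderiv i P) = 0

def sphereS (n : ℕ) : Set (E n) := Metric.sphere 0 1


open MvPolynomial

open MvPolynomial

variable {n : ℕ}
abbrev MPoly (n : ℕ) := MvPolynomial (Fin n) ℝ

lemma sum_eq_degree (s : Fin n →₀ ℕ) : ∑ i : Fin n, s i = s.degree := by
  rw [Finsupp.degree]
  exact (Finset.sum_subset (Finset.subset_univ _)
    (by simp +contextual [Finsupp.notMem_support_iff])).symm

lemma single_add_sub {s : Fin n →₀ ℕ} {i : Fin n} (h : s i ≠ 0) :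
    Finsupp.single i 1 + (s - Finsupp.single i 1) = s := by
  ext j
  rcases eq_or_ne j i with rfl | hj
  · simp only [Finsupp.add_apply, Finsupp.tsub_apply, Finsupp.single_eq_same]
    omega
  · simp [Finsupp.single_apply, Ne.symm hj, Finsupp.tsub_apply]

lemma degree_sub_single {s : Fin n →₀ ℕ} {i : Fin n} (h : s i ≠ 0) :
    (s - Finsupp.single i 1).degree = s.degree - 1 := by
  rw [← sum_eq_degree, ← sum_eq_degree, Fintype.sum_eq_add_sum_compl i,
    Fintype.sum_eq_add_sum_compl i]
  have h1 : (s - Finsupp.single i 1 : Fin n →₀ ℕ) i = s i - 1 := by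
    simp [Finsupp.tsub_apply]
  have h2 : ∑ j ∈ ({i}ᶜ : Finset (Fin n)), (s - Finsupp.single i 1 : Fin n →₀ ℕ) j
      = ∑ j ∈ ({i}ᶜ : Finset (Fin n)), s j := by
    refine Finset.sum_congr rfl fun j hj => ?_
    simp only [Finset.mem_compl, Finset.mem_singleton] at hj
    simp [Finsupp.tsub_apply, Finsupp.single_apply, Ne.symm hj]
  rw [h1, h2]
  omega

lemma X_mul_pderiv_monomial (i : Fin n) (s : Fin n →₀ ℕ) (a : ℝ) :
    X i * pderiv i (monomial s a) = monomial s (a * s i) := by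
  rw [pderiv_monomial]
  by_cases h : s i = 0
  · simp [h]
  · rw [X, monomial_mul, one_mul, single_add_sub h]

lemma euler {d : ℕ} {F : MPoly n} (hF : F.IsHomogeneous d) :
    ∑ i : Fin n, X i * pderiv i F = (d : ℝ) • F := by
  have h1 : ∀ i : Fin n, X i * pderiv i F
      = ∑ s ∈ F.support, monomial s (F.coeff s * s i) := by
    intro i
    conv_lhs => rw [← F.support_sum_monomial_coeff]
    rw [map_sum, Finset.mul_sum]
    exact Finset.sum_congr rfl fun s _ => X_mul_pderiv_monomial i s _
  calc ∑ i : Fin n, X i * pderiv i F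
      = ∑ s ∈ F.support, ∑ i : Fin n, monomial s (F.coeff s * s i) := by
        simp only [h1]; rw [Finset.sum_comm]
    _ = ∑ s ∈ F.support, (d : ℝ) • monomial s (F.coeff s) := by
        refine Finset.sum_congr rfl fun s hs => ?_
        have hdeg : s.degree = d := by
          by_contra hne
          exact (mem_support_iff.mp hs) (hF.coeff_eq_zero hne)
        rw [← map_sum, ← Finset.mul_sum, ← Nat.cast_sum, sum_eq_degree, hdeg,
          smul_monomial, smul_eq_mul, mul_comm]
    _ = (d : ℝ) • F := by rw [← Finset.smul_sum, F.support_sum_monomial_coeff]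

lemma homog_pderiv {d : ℕ} {F : MPoly n} (hF : F.IsHomogeneous d) (i : Fin n) :
    (pderiv i F).IsHomogeneous (d - 1) := by
  conv_lhs => rw [← F.support_sum_monomial_coeff]
  rw [map_sum]
  refine IsHomogeneous.sum _ _ _ fun s hs => ?_
  rw [pderiv_monomial]
  by_cases h : s i = 0
  · rw [h]; simp only [Nat.cast_zero, mul_zero, map_zero]
    exact isHomogeneous_zero _ _ _
  · have hdeg : s.degree = d := by
      by_contra hne
      exact (mem_support_iff.mp hs) (hF.coeff_eq_zero hne)
    exact isHomogeneous_monomial _ (by rw [degree_sub_single h, hdeg])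


def Lap (n : ℕ) : MPoly n →ₗ[ℝ] MPoly n :=
  ∑ i : Fin n, ((pderiv i).toLinearMap.comp (pderiv i).toLinearMap)

lemma Lap_apply (P : MPoly n) : Lap n P = ∑ i : Fin n, pderiv i (pderiv i P) := by
  simp [Lap, LinearMap.sum_apply]

lemma harm_iff (P : MPoly n) : Harm P ↔ Lap n P = 0 := by
  rw [Lap_apply]; rfl

lemma pderiv_pderiv_comm (i j : Fin n) (P : MPoly n) :
    pderiv i (pderiv j P) = pderiv j (pderiv i P) := by
  induction P using MvPolynomial.induction_on with
  | C a => simp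
  | add p q hp hq => simp [hp, hq]
  | mul_X p s hp =>
      simp only [pderiv_mul, map_add, hp, pderiv_X, Pi.single_apply]
      split_ifs <;> simp [hp] <;> ring

lemma Lap_pderiv (i : Fin n) (P : MPoly n) :
    Lap n (pderiv i P) = pderiv i (Lap n P) := by
  rw [Lap_apply, Lap_apply, map_sum]
  refine Finset.sum_congr rfl fun j _ => ?_
  rw [pderiv_pderiv_comm j i P, pderiv_pderiv_comm j i (pderiv j P)]

lemma Harm.pderiv'' {P : MPoly n} (h : Harm P) (i : Fin n) : Harm (pderiv i P) := by
  rw [harm_iff] at h ⊢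
  rw [Lap_pderiv, h, map_zero]

lemma Lap_mul (P Q : MPoly n) : Lap n (P * Q) =
    Lap n P * Q + P * Lap n Q + 2 * ∑ i : Fin n, pderiv i P * pderiv i Q := by
  simp only [Lap_apply]
  have h : ∀ i : Fin n, pderiv i (pderiv i (P * Q)) =
      pderiv i (pderiv i P) * Q + P * pderiv i (pderiv i Q)
        + 2 * (pderiv i P * pderiv i Q) := by
    intro i
    simp only [pderiv_mul, map_add]
    ring
  rw [Finset.sum_congr rfl fun i _ => h i, Finset.sum_add_distrib,
    Finset.sum_add_distrib, ← Finset.sum_mul, ← Finset.mul_sum, ← Finset.mul_sum]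

lemma Lap_mul_harm {P Q : MPoly n} (hP : Harm P) (hQ : Harm Q) :
    Lap n (P * Q) = 2 * ∑ i : Fin n, pderiv i P * pderiv i Q := by
  rw [Lap_mul, (harm_iff P).mp hP, (harm_iff Q).mp hQ]
  ring

lemma pderiv_eq_zero_of_isHomogeneous_zero {Q : MPoly n} (hQ : Q.IsHomogeneous 0)
    (i : Fin n) : pderiv i Q = 0 := by
  conv_lhs => rw [← Q.support_sum_monomial_coeff]
  rw [map_sum]
  refine Finset.sum_eq_zero fun s hs => ?_
  have hdeg : s.degree = 0 := by
    by_contra hne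
    exact (mem_support_iff.mp hs) (hQ.coeff_eq_zero hne)
  have hs0 : s = 0 := by
    rwa [Finsupp.degree_eq_zero_iff] at hdeg
  subst hs0
  simp

lemma nilpot : ∀ (k : ℕ) (P Q : MPoly n), Harm P → Harm Q → Q.IsHomogeneous k →
    (Lap n ^ (k + 1)) (P * Q) = 0 := by
  intro k
  induction k with
  | zero =>
      intro P Q hP hQ hQ0
      rw [pow_one, Lap_mul_harm hP hQ]
      simp [pderiv_eq_zero_of_isHomogeneous_zero hQ0]
  | succ k ih =>
      intro P Q hP hQ hQk
      rw [pow_succ, Module.End.mul_apply, Lap_mul_harm hP hQ, two_mul, map_add, map_sum]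
      have h0 : ∀ i : Fin n, (Lap n ^ (k + 1)) (pderiv i P * pderiv i Q) = 0 := fun i =>
        ih _ _ (hP.pderiv'' i) (hQ.pderiv'' i) (by simpa using homog_pderiv hQk i)
      simp [h0]


def r2 (n : ℕ) : MPoly n := ∑ i : Fin n, X i ^ 2

lemma two_eq_C : (2 : MPoly n) = C (2:ℝ) := by
  rw [map_ofNat]

lemma r2_homog : (r2 n).IsHomogeneous 2 :=
  IsHomogeneous.sum _ _ _ fun i _ => by simpa using (isHomogeneous_X ℝ i).pow 2

lemma pderiv_r2 (i : Fin n) : pderiv i (r2 n) = C 2 * X i := by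
  rw [r2, map_sum]
  rw [Finset.sum_eq_single_of_mem i (Finset.mem_univ i)
    (fun j _ hj => by simp [pderiv_pow, pderiv_X_of_ne hj])]
  rw [pderiv_pow, pderiv_X_self,
    show ((2:ℕ) : MPoly n) = C (2:ℝ) by
      rw [← map_natCast (C : ℝ →+* MPoly n) 2]; norm_num]
  ring

lemma Lap_r2 : Lap n (r2 n) = C ((2 * n : ℝ)) := by
  rw [Lap_apply]
  have h : ∀ i : Fin n, pderiv i (pderiv i (r2 n)) = C (2:ℝ) := by
    intro i
    rw [pderiv_r2, pderiv_C_mul, pderiv_X_self, mul_one]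
  rw [Finset.sum_congr rfl fun i _ => h i, Finset.sum_const, Finset.card_univ,
    Fintype.card_fin, ← map_nsmul]
  congr 1
  push_cast
  ring

lemma Lap_r2_mul {e : ℕ} {K : MPoly n} (hK : K.IsHomogeneous e) :
    Lap n (r2 n * K) = C ((2 * n + 4 * e : ℝ)) * K + r2 n * Lap n K := by
  rw [Lap_mul, Lap_r2]
  have h1 : ∑ i : Fin n, pderiv i (r2 n) * pderiv i K
      = C (2:ℝ) * (C ((e:ℝ)) * K) := by
    calc ∑ i : Fin n, pderiv i (r2 n) * pderiv i K
        = C (2:ℝ) * ∑ i : Fin n, X i * pderiv i K := by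
          rw [Finset.mul_sum]
          exact Finset.sum_congr rfl fun i _ => by rw [pderiv_r2]; ring
      _ = C (2:ℝ) * (C ((e:ℝ)) * K) := by rw [euler hK, smul_eq_C_mul]
  rw [h1, two_eq_C,
    show (C ((2 * n + 4 * e : ℝ)) : MPoly n)
        = C ((2 * (n:ℝ))) + C (2:ℝ) * (C (2:ℝ) * C ((e:ℝ))) from by
      rw [← map_mul, ← map_mul, ← map_add]; congr 1; ring]
  ring

lemma Lap_r2pow {e : ℕ} {H : MPoly n} (hH : Harm H) (hHe : H.IsHomogeneous e) :
    ∀ i : ℕ, Lap n (r2 n ^ (i+1) * H)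
      = C ((2*(i+1)*(2*e+n+2*i) : ℝ)) * (r2 n ^ i * H) := by
  intro i
  induction i with
  | zero =>
      rw [pow_one, Lap_r2_mul hHe, (harm_iff H).mp hH, mul_zero, add_zero, pow_zero, one_mul]
      congr 1
      push_cast
      ring
  | succ i ih =>
      have hK : (r2 n ^ (i+1) * H).IsHomogeneous (2*(i+1) + e) :=
        (r2_homog.pow (i+1)).mul hHe
      rw [show r2 n ^ (i+1+1) * H = r2 n * (r2 n ^ (i+1) * H) by ring,
        Lap_r2_mul hK, ih]
      have hcomb : ∀ a b : ℝ, C a * (r2 n ^ (i+1) * H) + r2 n * (C b * (r2 n ^ i * H))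
          = C (a + b) * (r2 n ^ (i+1) * H) := by
        intro a b; rw [map_add]; ring
      rw [hcomb]
      congr 1
      push_cast
      ring

lemma harm_zero : Harm (0 : MPoly n) := (harm_iff 0).mpr (map_zero _)


lemma harm_smul {P : MPoly n} (h : Harm P) (c : ℝ) : Harm (c • P) := by
  rw [harm_iff] at h ⊢
  rw [map_smul, h, smul_zero]

lemma homog_smul {d : ℕ} {P : MPoly n} (h : P.IsHomogeneous d) (c : ℝ) :
    (c • P).IsHomogeneous d := by
  rw [smul_eq_C_mul]
  exact h.C_mul c

lemma decomp (hn : 0 < n) : ∀ (t d : ℕ) (F : MPoly n), F.IsHomogeneous d →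
    (Lap n ^ t) F = 0 →
    ∃ H : ℕ → MPoly n,
      (∀ j, Harm (H j) ∧ (H j = 0 ∨ ((H j).IsHomogeneous (d - 2*j) ∧ 2*j ≤ d))) ∧
      F = ∑ j ∈ Finset.range t, r2 n ^ j * H j := by
  intro t
  induction t with
  | zero =>
      intro d F hF h0
      rw [pow_zero, Module.End.one_apply] at h0
      exact ⟨fun _ => 0, fun j => ⟨harm_zero, Or.inl rfl⟩, by simp [h0]⟩
  | succ t ih =>
      intro d F hF h0
      rcases lt_or_ge d 2 with hd | hd
      · have hharm : Harm F := by
          rw [harm_iff, Lap_apply]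
          refine Finset.sum_eq_zero fun i _ => ?_
          have h1 := homog_pderiv hF i
          rw [show d - 1 = 0 by omega] at h1
          exact pderiv_eq_zero_of_isHomogeneous_zero h1 i
        refine ⟨fun j => if j = 0 then F else 0, fun j => ?_, ?_⟩
        · rcases eq_or_ne j 0 with rfl | hj
          · exact ⟨by simpa using hharm, Or.inr ⟨by simpa using hF, by omega⟩⟩
          · exact ⟨by simp [hj, harm_zero], Or.inl (by simp [hj])⟩
        · rw [Finset.sum_eq_single_of_mem 0 (Finset.mem_range.mpr (by omega))
            (fun j _ hj => by simp [hj])]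
          simp
      · obtain ⟨e, rfl⟩ : ∃ e, d = e + 2 := ⟨d - 2, by omega⟩
        have hG : (Lap n F).IsHomogeneous e := by
          rw [Lap_apply]
          refine IsHomogeneous.sum _ _ _ fun i _ => ?_
          have h1 := homog_pderiv (homog_pderiv hF i) i
          rwa [show e + 2 - 1 - 1 = e by omega] at h1
        have h0' : (Lap n ^ t) (Lap n F) = 0 := by
          rw [← Module.End.mul_apply, ← pow_succ, h0]
        obtain ⟨G, hGprop, hGsum⟩ := ih e (Lap n F) hG h0'
        set c : ℕ → ℝ := fun j => ((2*(j+1)*(2*(e - 2*j)+n+2*j) : ℕ) : ℝ) with hc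
        have hcne : ∀ j, c j ≠ 0 := fun j => by
          rw [hc]
          exact Nat.cast_ne_zero.mpr (Nat.ne_of_gt (Nat.mul_pos (by omega) (by omega)))
        have hLapterm : ∀ j, Lap n ((c j)⁻¹ • (r2 n ^ (j+1) * G j))
            = r2 n ^ j * G j := by
          intro j
          rcases eq_or_ne (G j) 0 with hGj | hGj
          · simp [hGj]
          · obtain ⟨hhom, hle⟩ := ((hGprop j).2).resolve_left hGj
            rw [map_smul, Lap_r2pow (hGprop j).1 hhom j, ← smul_eq_C_mul, smul_smul]
            rw [show ((2*((j:ℝ)+1)*(2*(((e - 2*j : ℕ)):ℝ)+n+2*j))) = c j by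
              rw [hc]; push_cast; ring]
            rw [inv_mul_cancel₀ (hcne j), one_smul]
        refine ⟨fun j => match j with
          | 0 => F - ∑ i ∈ Finset.range t, (c i)⁻¹ • (r2 n ^ (i+1) * G i)
          | (j+1) => (c j)⁻¹ • G j, fun j => ?_, ?_⟩
        · match j with
          | 0 =>
            constructor
            · rw [harm_iff, map_sub, map_sum]
              rw [Finset.sum_congr rfl fun j _ => hLapterm j, ← hGsum, sub_self]
            · refine Or.inr ⟨?_, by omega⟩
              rw [show e + 2 - 2*0 = e + 2 by omega]
              refine hF.sub (IsHomogeneous.sum _ _ _ fun i _ => ?_)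
              rcases eq_or_ne (G i) 0 with hGi | hGi
              · rw [hGi]
                simpa using isHomogeneous_zero _ _ (e+2)
              · obtain ⟨hhom, hle⟩ := ((hGprop i).2).resolve_left hGi
                have h2 := homog_smul ((r2_homog.pow (i+1)).mul hhom) ((c i)⁻¹)
                rwa [show 2*(i+1) + (e - 2*i) = e + 2 by omega] at h2
          | (j+1) =>
            refine ⟨harm_smul (hGprop j).1 _, ?_⟩
            rcases eq_or_ne (G j) 0 with hGj | hGj
            · exact Or.inl (by simp [hGj])
            · obtain ⟨hhom, hle⟩ := ((hGprop j).2).resolve_left hGj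
              refine Or.inr ⟨?_, by omega⟩
              rw [show e + 2 - 2*(j+1) = e - 2*j by omega]
              exact homog_smul hhom _
        · rw [Finset.sum_range_succ']
          simp only [pow_zero, one_mul]
          have : ∀ i ∈ Finset.range t, r2 n ^ (i+1) * ((c i)⁻¹ • G i)
              = (c i)⁻¹ • (r2 n ^ (i+1) * G i) := fun i _ => (mul_smul_comm _ _ _)
          rw [Finset.sum_congr rfl this]
          ring

/-- Product of spherical harmonics: if `f ∈ Ω_m` and `f' ∈ Ω_k` with `m ≥ k`
(viewed as harmonic homogeneous polynomials `P, Q`), then on the unit sphere the product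
`f · f'` is a sum of spherical harmonics of degrees `m + k - 2ℓ` for `0 ≤ ℓ ≤ k`. -/
theorem xray_stmt10 {n m k : ℕ} (hmk : k ≤ m)
    (P Q : MvPolynomial (Fin n) ℝ) (hP : Harm P) (hPm : P.IsHomogeneous m)
    (hQ : Harm Q) (hQk : Q.IsHomogeneous k) :
    ∃ R : ℕ → MvPolynomial (Fin n) ℝ,
      (∀ ℓ, Harm (R ℓ) ∧ (R ℓ = 0 ∨ (R ℓ).IsHomogeneous (m + k - 2 * ℓ))) ∧
      ∀ v ∈ sphereS n,
        evalP (P * Q) v = ∑ ℓ ∈ Finset.range (k + 1), evalP (R ℓ) v := by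
  rcases Nat.eq_zero_or_pos n with rfl | hn
  · refine ⟨fun _ => 0, fun ℓ => ⟨harm_zero, Or.inl rfl⟩, fun v hv => ?_⟩
    exfalso
    have h1 : ‖v‖ = 1 := mem_sphere_zero_iff_norm.mp hv
    rw [Subsingleton.elim v 0, norm_zero] at h1
    norm_num at h1
  · have hF : (P * Q).IsHomogeneous (m + k) := hPm.mul hQk
    have h0 := nilpot k P Q hP hQ hQk
    obtain ⟨H, hHprop, hHsum⟩ := decomp hn (k+1) (m+k) (P*Q) hF h0
    refine ⟨H, fun ℓ => ⟨(hHprop ℓ).1, ?_⟩, fun v hv => ?_⟩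
    · rcases (hHprop ℓ).2 with h | h
      · exact Or.inl h
      · exact Or.inr h.1
    · have hv1 : ∑ i : Fin n, (v i)^2 = 1 := by
        have h1 : ‖v‖ = 1 := mem_sphere_zero_iff_norm.mp hv
        have h2 := EuclideanSpace.norm_eq v
        rw [h1] at h2
        have h3 : ∑ i, ‖v i‖^2 = 1 := Real.sqrt_eq_one.mp h2.symm
        simpa [Real.norm_eq_abs, sq_abs] using h3
      rw [evalP, hHsum, map_sum]
      refine Finset.sum_congr rfl fun j _ => ?_
      rw [map_mul, map_pow]
      have he : MvPolynomial.eval (fun i => v i) (r2 n) = 1 := by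
        rw [r2, map_sum]
        simpa using hv1
      rw [he, one_pow, one_mul]
      rfl
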